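/- Let R be a commutative ring and F ∈ R[[X,Y]] a formal group law. Then the operation a ⊕ b := F(a,b) (which is well-defined on nilpotent elements since substitution of nilpotents into a power series with no constant term terminates) makes the set of nilpotent elements of R into an abelian group with neutral element 0. -/

import Mathlib

/-- Substitution `F(g,h)` of two power series of positive order into a two-variable
formal power series `F`. -/
noncomputable def substF2 {R : Type*} [CommRing R] {σ : Type*}
    (F : MvPowerSeries (Fin 2) R) (g h : MvPowerSeries σ R) : MvPowerSeries σ R :=
  fun d => ∑ a ∈ Finset.range ((d.sum fun _ k => k) + 1),
    ∑ b ∈ Finset.range ((d.sum fun _ k => k) + 1),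
      MvPowerSeries.coeff
          (Finsupp.single (0 : Fin 2) a + Finsupp.single (1 : Fin 2) b) F *
        MvPowerSeries.coeff d (g ^ a * h ^ b)

/-- Truncated evaluation of a two-variable power series `F` at elements `a`, `b` of the
base ring: `∑_{i,j < N} F_{i,j} a^i b^j`.  When `a^N = 0 = b^N` this is the (terminating)
substitution of the nilpotents `a`, `b` into `F`. -/
noncomputable def evalF2 {R : Type*} [CommRing R]
    (F : MvPowerSeries (Fin 2) R) (a b : R) (N : ℕ) : R :=
  ∑ i ∈ Finset.range N, ∑ j ∈ Finset.range N,
    MvPowerSeries.coeff (Finsupp.single (0 : Fin 2) i + Finsupp.single (1 : Fin 2) j) F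
      * a ^ i * b ^ j

open MvPowerSeries

namespace FGLAux

open Finset

variable {R : Type*} [CommRing R]

/-- total degree of an exponent finsupp -/
abbrev dg {σ : Type*} (d : σ →₀ ℕ) : ℕ := d.sum fun _ k => k

lemma dg_add {σ : Type*} (u v : σ →₀ ℕ) : dg (u + v) = dg u + dg v :=
  Finsupp.sum_add_index' (fun _ => rfl) (fun _ _ _ => rfl)

lemma dg_eq_zero_iff {σ : Type*} (d : σ →₀ ℕ) : dg d = 0 ↔ d = 0 := by
  show d.degree = 0 ↔ d = 0
  exact Finsupp.degree_eq_zero_iff d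

lemma dg_mono {σ : Type*} [Fintype σ] {d D : σ →₀ ℕ} (h : d ≤ D) : dg d ≤ dg D := by
  rw [show dg d = ∑ i, d i from Finsupp.sum_fintype _ _ (fun _ => rfl),
    show dg D = ∑ i, D i from Finsupp.sum_fintype _ _ (fun _ => rfl)]
  exact Finset.sum_le_sum fun i _ => h i

lemma coeff_pow_mul_eq_zero {σ : Type*} (g : MvPowerSeries σ R)
    (hg : constantCoeff g = 0) :
    ∀ (n : ℕ) (d : σ →₀ ℕ) (h : MvPowerSeries σ R), dg d < n →
      MvPowerSeries.coeff d (g ^ n * h) = 0 := by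
  intro n
  induction n with
  | zero => intro d h hd; exact absurd hd (Nat.not_lt_zero _)
  | succ n ih =>
    intro d h hd
    classical
    rw [pow_succ', mul_assoc, coeff_mul]
    apply Finset.sum_eq_zero
    rintro ⟨u, w⟩ hp
    rw [Finset.HasAntidiagonal.mem_antidiagonal] at hp
    by_cases hu : u = 0
    · subst hu
      simp only [coeff_zero_eq_constantCoeff] at *
      rw [hg, zero_mul]
    · have h1 : 1 ≤ dg u := by
        rcases Nat.eq_zero_or_pos (dg u) with h0 | h0
        · exact absurd ((dg_eq_zero_iff u).1 h0) hu
        · exact h0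
      have : dg w < n := by
        have := dg_add u w
        rw [hp] at this
        omega
      rw [ih w h this, mul_zero]

lemma evalF2_stable (F : MvPowerSeries (Fin 2) R) {a b : R} {N M : ℕ}
    (ha : a ^ N = 0) (hb : b ^ N = 0) (hNM : N ≤ M) :
    evalF2 F a b M = evalF2 F a b N := by
  unfold evalF2
  rw [← Finset.sum_subset (Finset.range_subset_range.2 hNM)]
  · apply Finset.sum_congr rfl
    intro i _
    rw [← Finset.sum_subset (Finset.range_subset_range.2 hNM)]
    intro j _ hj
    rw [Finset.mem_range, not_lt] at hj
    rw [pow_eq_zero_of_le hj hb, mul_zero]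
  · intro i _ hi
    rw [Finset.mem_range, not_lt] at hi
    apply Finset.sum_eq_zero
    intro j _
    rw [pow_eq_zero_of_le hi ha, mul_zero, zero_mul]

/-- monomial evaluation -/
noncomputable def mon (v : Fin 3 → R) (d : Fin 3 →₀ ℕ) : R := ∏ i, v i ^ d i

lemma mon_add (v : Fin 3 → R) (u w : Fin 3 →₀ ℕ) : mon v (u + w) = mon v u * mon v w := by
  unfold mon
  rw [← Finset.prod_mul_distrib]
  exact Finset.prod_congr rfl fun i _ => by rw [Finsupp.add_apply, pow_add]

lemma mon_eq_zero (v : Fin 3 → R) (D : Fin 3 →₀ ℕ) (hv : ∀ i, v i ^ (D i + 1) = 0)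
    {d : Fin 3 →₀ ℕ} (hd : ¬ d ≤ D) : mon v d = 0 := by
  rw [Finsupp.le_def, not_forall] at hd
  obtain ⟨i, hi⟩ := hd
  rw [not_le] at hi
  exact Finset.prod_eq_zero (Finset.mem_univ i) (pow_eq_zero_of_le hi (hv i))

/-- truncated evaluation of a 3-variable power series at `v`, using box `Iic D` -/
noncomputable def ev3 (v : Fin 3 → R) (D : Fin 3 →₀ ℕ) (H : MvPowerSeries (Fin 3) R) : R :=
  ∑ d ∈ Finset.Iic D, MvPowerSeries.coeff d H * mon v d

lemma ev3_one (v : Fin 3 → R) (D : Fin 3 →₀ ℕ) : ev3 v D 1 = 1 := by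
  classical
  unfold ev3
  rw [Finset.sum_eq_single (0 : Fin 3 →₀ ℕ)]
  · simp [coeff_one, mon]
  · intro d _ hd
    rw [coeff_one, if_neg hd, zero_mul]
  · intro h
    exact absurd (Finset.mem_Iic.2 bot_le) h

lemma ev3_mul (v : Fin 3 → R) (D : Fin 3 →₀ ℕ) (hv : ∀ i, v i ^ (D i + 1) = 0)
    (H₁ H₂ : MvPowerSeries (Fin 3) R) :
    ev3 v D (H₁ * H₂) = ev3 v D H₁ * ev3 v D H₂ := by
  classical
  set t : (Fin 3 →₀ ℕ) × (Fin 3 →₀ ℕ) → R := fun p =>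
    (MvPowerSeries.coeff p.1 H₁ * mon v p.1) * (MvPowerSeries.coeff p.2 H₂ * mon v p.2)
    with ht
  have step1 : ev3 v D (H₁ * H₂)
      = ∑ d ∈ Finset.Iic D, ∑ p ∈ Finset.HasAntidiagonal.antidiagonal d, t p := by
    unfold ev3
    apply Finset.sum_congr rfl
    intro d hd
    rw [coeff_mul, Finset.sum_mul]
    apply Finset.sum_congr rfl
    rintro ⟨u, w⟩ hp
    rw [Finset.HasAntidiagonal.mem_antidiagonal] at hp
    rw [← hp, mon_add, ht]
    ring
  have step2 : ∑ d ∈ Finset.Iic D, ∑ p ∈ Finset.HasAntidiagonal.antidiagonal d, t p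
      = ∑ p ∈ (Finset.Iic D ×ˢ Finset.Iic D).filter (fun p => p.1 + p.2 ≤ D), t p := by
    rw [Finset.sum_sigma']
    refine Finset.sum_bij' (fun x _ => x.2) (fun p _ => ⟨p.1 + p.2, p⟩) ?_ ?_ ?_ ?_ ?_
    · rintro ⟨d, u, w⟩ hx
      rw [Finset.mem_sigma, Finset.mem_Iic, Finset.HasAntidiagonal.mem_antidiagonal] at hx
      rw [Finset.mem_filter, Finset.mem_product, Finset.mem_Iic, Finset.mem_Iic]
      refine ⟨⟨?_, ?_⟩, by simp only; rw [hx.2]; exact hx.1⟩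
      · exact le_trans (by rw [← hx.2]; exact le_self_add) hx.1
      · exact le_trans (by rw [← hx.2]; exact le_add_self) hx.1
    · rintro ⟨u, w⟩ hp
      rw [Finset.mem_filter] at hp
      rw [Finset.mem_sigma, Finset.mem_Iic, Finset.HasAntidiagonal.mem_antidiagonal]
      exact ⟨hp.2, rfl⟩
    · rintro ⟨d, u, w⟩ hx
      rw [Finset.mem_sigma, Finset.HasAntidiagonal.mem_antidiagonal] at hx
      simp only
      rw [hx.2]
    · rintro ⟨u, w⟩ _
      rfl
    · rintro ⟨d, u, w⟩ _
      rfl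
  have step3 : ∑ p ∈ (Finset.Iic D ×ˢ Finset.Iic D).filter (fun p => p.1 + p.2 ≤ D), t p
      = ∑ p ∈ Finset.Iic D ×ˢ Finset.Iic D, t p := by
    apply Finset.sum_subset (Finset.filter_subset _ _)
    intro p hpmem hp
    have hnle : ¬ p.1 + p.2 ≤ D := by
      intro hle
      exact hp (Finset.mem_filter.2 ⟨hpmem, hle⟩)
    have hz : mon v p.1 * mon v p.2 = 0 := by
      rw [← mon_add]; exact mon_eq_zero v D hv hnle
    rw [ht]
    calc (MvPowerSeries.coeff p.1 H₁ * mon v p.1) * (MvPowerSeries.coeff p.2 H₂ * mon v p.2)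
        = (MvPowerSeries.coeff p.1 H₁ * MvPowerSeries.coeff p.2 H₂) *
            (mon v p.1 * mon v p.2) := by ring
      _ = 0 := by rw [hz, mul_zero]
  rw [step1, step2, step3, Finset.sum_product]
  unfold ev3
  rw [Finset.sum_mul_sum]

lemma ev3_pow (v : Fin 3 → R) (D : Fin 3 →₀ ℕ) (hv : ∀ i, v i ^ (D i + 1) = 0)
    (H : MvPowerSeries (Fin 3) R) (n : ℕ) : ev3 v D (H ^ n) = (ev3 v D H) ^ n := by
  induction n with
  | zero => rw [pow_zero, pow_zero, ev3_one]
  | succ n ih => rw [pow_succ, pow_succ, ev3_mul v D hv, ih]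

lemma ev3_X (v : Fin 3 → R) (D : Fin 3 →₀ ℕ) (i : Fin 3) (hD : 1 ≤ D i) :
    ev3 v D (MvPowerSeries.X i) = v i := by
  classical
  unfold ev3
  rw [Finset.sum_eq_single (Finsupp.single i 1)]
  · rw [coeff_X, if_pos rfl, one_mul]
    unfold mon
    rw [Finset.prod_eq_single i]
    · rw [Finsupp.single_eq_same, pow_one]
    · intro j _ hj
      rw [Finsupp.single_eq_of_ne hj, pow_zero]
    · intro h; exact absurd (Finset.mem_univ i) h
  · intro d _ hd
    rw [coeff_X, if_neg hd, zero_mul]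
  · intro h
    refine absurd (Finset.mem_Iic.2 ?_) h
    rw [Finsupp.le_def]
    intro j
    by_cases hj : j = i
    · subst hj; rw [Finsupp.single_eq_same]; exact hD
    · rw [Finsupp.single_eq_of_ne hj]; exact Nat.zero_le _

lemma coeff_substF2 (F : MvPowerSeries (Fin 2) R) {σ : Type*}
    (g h : MvPowerSeries σ R) (hg : constantCoeff g = 0) (hh : constantCoeff h = 0)
    {d : σ →₀ ℕ} {L : ℕ} (hL : dg d < L) :
    MvPowerSeries.coeff d (substF2 F g h)
      = ∑ a ∈ Finset.range L, ∑ b ∈ Finset.range L,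
          MvPowerSeries.coeff
            (Finsupp.single (0 : Fin 2) a + Finsupp.single (1 : Fin 2) b) F *
          MvPowerSeries.coeff d (g ^ a * h ^ b) := by
  have hsub : Finset.range (dg d + 1) ⊆ Finset.range L := Finset.range_subset_range.2 (by omega)
  have hdef : MvPowerSeries.coeff d (substF2 F g h)
      = ∑ a ∈ Finset.range (dg d + 1), ∑ b ∈ Finset.range (dg d + 1),
          MvPowerSeries.coeff
            (Finsupp.single (0 : Fin 2) a + Finsupp.single (1 : Fin 2) b) F *
          MvPowerSeries.coeff d (g ^ a * h ^ b) := rfl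
  rw [hdef]
  rw [Finset.sum_subset hsub]
  · apply Finset.sum_congr rfl
    intro a _
    apply Finset.sum_subset hsub
    intro b _ hb
    rw [Finset.mem_range, not_lt] at hb
    rw [mul_comm (g ^ a) (h ^ b), coeff_pow_mul_eq_zero h hh b d (g ^ a) (by omega), mul_zero]
  · intro a _ ha
    rw [Finset.mem_range, not_lt] at ha
    apply Finset.sum_eq_zero
    intro b _
    rw [coeff_pow_mul_eq_zero g hg a d (h ^ b) (by omega), mul_zero]

lemma ev3_pow_vanish (v : Fin 3 → R) (D : Fin 3 →₀ ℕ)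
    (g : MvPowerSeries (Fin 3) R) (hg : constantCoeff g = 0)
    {L : ℕ} (hL : dg D < L) : ev3 v D (g ^ L) = 0 := by
  unfold ev3
  apply Finset.sum_eq_zero
  intro d hd
  rw [Finset.mem_Iic] at hd
  have hz : MvPowerSeries.coeff d (g ^ L) = 0 := by
    have := coeff_pow_mul_eq_zero g hg L d 1 (lt_of_le_of_lt (dg_mono hd) hL)
    rwa [mul_one] at this
  rw [hz, zero_mul]

lemma ev3_substF2 (F : MvPowerSeries (Fin 2) R) (v : Fin 3 → R) (D : Fin 3 →₀ ℕ)
    (hv : ∀ i, v i ^ (D i + 1) = 0)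
    (g h : MvPowerSeries (Fin 3) R)
    (hg : constantCoeff g = 0) (hh : constantCoeff h = 0)
    {L : ℕ} (hL : dg D < L) :
    ev3 v D (substF2 F g h) = evalF2 F (ev3 v D g) (ev3 v D h) L := by
  have step1 : ev3 v D (substF2 F g h)
      = ∑ d ∈ Finset.Iic D, ∑ a ∈ Finset.range L, ∑ b ∈ Finset.range L,
          MvPowerSeries.coeff
            (Finsupp.single (0 : Fin 2) a + Finsupp.single (1 : Fin 2) b) F *
          MvPowerSeries.coeff d (g ^ a * h ^ b) * mon v d := by
    unfold ev3
    apply Finset.sum_congr rfl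
    intro d hd
    rw [Finset.mem_Iic] at hd
    rw [coeff_substF2 F g h hg hh (lt_of_le_of_lt (dg_mono hd) hL), Finset.sum_mul]
    exact Finset.sum_congr rfl fun a _ => by rw [Finset.sum_mul]
  rw [step1, Finset.sum_comm]
  unfold evalF2
  apply Finset.sum_congr rfl
  intro a _
  rw [Finset.sum_comm]
  apply Finset.sum_congr rfl
  intro b _
  have hmain : ∑ d ∈ Finset.Iic D,
      MvPowerSeries.coeff
        (Finsupp.single (0 : Fin 2) a + Finsupp.single (1 : Fin 2) b) F *
      MvPowerSeries.coeff d (g ^ a * h ^ b) * mon v d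
      = MvPowerSeries.coeff
          (Finsupp.single (0 : Fin 2) a + Finsupp.single (1 : Fin 2) b) F *
        ev3 v D (g ^ a * h ^ b) := by
    unfold ev3
    rw [Finset.mul_sum]
    exact Finset.sum_congr rfl fun d _ => by ring
  rw [hmain, ev3_mul v D hv, ev3_pow v D hv, ev3_pow v D hv]
  ring

lemma dvd_aux (F : MvPowerSeries (Fin 2) R)
    (hY : ∀ n : ℕ, coeff (Finsupp.single (1 : Fin 2) n) F = if n = 1 then 1 else 0)
    (x y y' : R) (N : ℕ) (hN : 2 ≤ N) :
    x * (y - y') ∣ (evalF2 F x y N - evalF2 F x y' N - (y - y')) := by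
  unfold evalF2
  rw [← Finset.sum_sub_distrib]
  have key : ∀ i ∈ Finset.range N,
      (∑ j ∈ Finset.range N,
        coeff (Finsupp.single (0 : Fin 2) i + Finsupp.single (1 : Fin 2) j) F * x ^ i * y ^ j)
      - (∑ j ∈ Finset.range N,
        coeff (Finsupp.single (0 : Fin 2) i + Finsupp.single (1 : Fin 2) j) F * x ^ i * y' ^ j)
      = ∑ j ∈ Finset.range N,
        coeff (Finsupp.single (0 : Fin 2) i + Finsupp.single (1 : Fin 2) j) F * x ^ i *
          (y ^ j - y' ^ j) := by
    intro i _
    rw [← Finset.sum_sub_distrib]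
    exact Finset.sum_congr rfl fun j _ => by ring
  rw [Finset.sum_congr rfl key]
  set f : ℕ → R := fun i => ∑ j ∈ Finset.range N,
      coeff (Finsupp.single (0 : Fin 2) i + Finsupp.single (1 : Fin 2) j) F * x ^ i *
        (y ^ j - y' ^ j) with hf
  have hf0 : f 0 = y - y' := by
    rw [hf]
    simp only
    rw [Finset.sum_eq_single 1]
    · rw [Finsupp.single_zero, zero_add, hY 1, if_pos rfl]
      ring
    · intro j _ hj
      rw [Finsupp.single_zero, zero_add, hY j, if_neg hj, zero_mul, zero_mul]
    · intro h
      exact absurd (Finset.mem_range.2 (by omega)) h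
  have hfi : ∀ i, i ≠ 0 → x * (y - y') ∣ f i := by
    intro i hi
    rw [hf]
    simp only
    apply Finset.dvd_sum
    intro j _
    have h1 : coeff (Finsupp.single (0 : Fin 2) i + Finsupp.single (1 : Fin 2) j) F * x ^ i *
        (y ^ j - y' ^ j)
        = coeff (Finsupp.single (0 : Fin 2) i + Finsupp.single (1 : Fin 2) j) F *
          (x ^ i * (y ^ j - y' ^ j)) := by ring
    rw [h1]
    exact Dvd.dvd.mul_left (mul_dvd_mul (dvd_pow_self x hi) (sub_dvd_pow_sub_pow y y' j)) _
  have hsplit : ∑ i ∈ Finset.range N, f i = f 0 + ∑ i ∈ (Finset.range N).erase 0, f i :=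
    (Finset.add_sum_erase _ f (Finset.mem_range.2 (by omega))).symm
  rw [hsplit, hf0]
  have h2 : y - y' + ∑ i ∈ (Finset.range N).erase 0, f i - (y - y')
      = ∑ i ∈ (Finset.range N).erase 0, f i := by ring
  rw [h2]
  exact Finset.dvd_sum fun i hi => hfi i (Finset.mem_erase.1 hi).1

lemma evalx0 (F : MvPowerSeries (Fin 2) R)
    (hX : ∀ n : ℕ, coeff (Finsupp.single (0 : Fin 2) n) F = if n = 1 then 1 else 0)
    (x : R) (N : ℕ) (hN : 2 ≤ N) : evalF2 F x 0 N = x := by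
  unfold evalF2
  have inner : ∀ i ∈ Finset.range N,
      (∑ j ∈ Finset.range N,
        coeff (Finsupp.single (0 : Fin 2) i + Finsupp.single (1 : Fin 2) j) F * x ^ i *
          (0 : R) ^ j)
      = coeff (Finsupp.single (0 : Fin 2) i) F * x ^ i := by
    intro i _
    rw [Finset.sum_eq_single 0]
    · rw [pow_zero, mul_one, Finsupp.single_zero, add_zero]
    · intro j _ hj
      rw [zero_pow hj, mul_zero]
    · intro h
      exact absurd (Finset.mem_range.2 (by omega)) h
  rw [Finset.sum_congr rfl inner, Finset.sum_eq_single 1]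
  · rw [hX 1, if_pos rfl, one_mul, pow_one]
  · intro i _ hi
    rw [hX i, if_neg hi, zero_mul]
  · intro h
    exact absurd (Finset.mem_range.2 (by omega)) h

lemma eval0x (F : MvPowerSeries (Fin 2) R)
    (hY : ∀ n : ℕ, coeff (Finsupp.single (1 : Fin 2) n) F = if n = 1 then 1 else 0)
    (x : R) (N : ℕ) (hN : 2 ≤ N) : evalF2 F 0 x N = x := by
  unfold evalF2
  rw [Finset.sum_eq_single 0]
  · rw [Finset.sum_eq_single 1]
    · rw [Finsupp.single_zero, zero_add, hY 1, if_pos rfl]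
      ring
    · intro j _ hj
      rw [Finsupp.single_zero, zero_add, hY j, if_neg hj, zero_mul, zero_mul]
    · intro h
      exact absurd (Finset.mem_range.2 (by omega)) h
  · intro i _ hi
    apply Finset.sum_eq_zero
    intro j _
    rw [zero_pow hi, mul_zero, zero_mul]
  · intro h
    exact absurd (Finset.mem_range.2 (by omega)) h


end FGLAux

open FGLAux

/-- for a (unital, commutative, associative) formal group law `F`, the
operation `a ⊕ b := F(a,b)` is well defined on nilpotent elements (independent of the
truncation used to evaluate it) and turns the set of nilpotent elements of `R` into an
abelian group with neutral element `0`. -/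
theorem stmt2 {R : Type*} [CommRing R] (F : MvPowerSeries (Fin 2) R)
    (hX : ∀ n : ℕ, coeff (Finsupp.single (0 : Fin 2) n) F = if n = 1 then 1 else 0)
    (hY : ∀ n : ℕ, coeff (Finsupp.single (1 : Fin 2) n) F = if n = 1 then 1 else 0)
    (hsymm : ∀ a b : ℕ,
      coeff (Finsupp.single (0 : Fin 2) a + Finsupp.single (1 : Fin 2) b) F
        = coeff (Finsupp.single (0 : Fin 2) b + Finsupp.single (1 : Fin 2) a) F)
    (hassoc : substF2 F (substF2 F (X 0) (X 1)) (X 2)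
      = substF2 F (X 0) (substF2 F (X 1) (X (2 : Fin 3)))) :
    ∃ op : R → R → R,
      -- well-definedness: `op` is computed by any valid truncation
      (∀ a b : R, ∀ N : ℕ, a ^ N = 0 → b ^ N = 0 → op a b = evalF2 F a b N) ∧
      -- closure
      (∀ a b : R, IsNilpotent a → IsNilpotent b → IsNilpotent (op a b)) ∧
      -- neutral element 0
      (∀ a : R, IsNilpotent a → op a 0 = a ∧ op 0 a = a) ∧
      -- commutativity
      (∀ a b : R, IsNilpotent a → IsNilpotent b → op a b = op b a) ∧
      -- associativity
      (∀ a b c : R, IsNilpotent a → IsNilpotent b → IsNilpotent c →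
        op (op a b) c = op a (op b c)) ∧
      -- inverses
      (∀ a : R, IsNilpotent a → ∃ b : R, IsNilpotent b ∧ op a b = 0) := by
  classical
  set op : R → R → R := fun a b =>
    if h : ∃ N, a ^ N = 0 ∧ b ^ N = 0 then evalF2 F a b h.choose else 0 with hop
  -- well-definedness
  have wd : ∀ a b : R, ∀ N : ℕ, a ^ N = 0 → b ^ N = 0 → op a b = evalF2 F a b N := by
    intro a b N ha hb
    have hex : ∃ N, a ^ N = 0 ∧ b ^ N = 0 := ⟨N, ha, hb⟩
    have h1 : op a b = evalF2 F a b hex.choose := by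
      simp only [hop]
      rw [dif_pos hex]
    obtain ⟨ha', hb'⟩ := hex.choose_spec
    have e1 := evalF2_stable F ha' hb' (le_max_right N hex.choose)
    have e2 := evalF2_stable F ha hb (le_max_left N hex.choose)
    rw [h1, ← e1, e2]
  -- common nilpotency exponent for triples
  have comm3 : ∀ a b c : R, IsNilpotent a → IsNilpotent b → IsNilpotent c →
      ∃ n : ℕ, 1 ≤ n ∧ a ^ n = 0 ∧ b ^ n = 0 ∧ c ^ n = 0 := by
    rintro a b c ⟨p, hp⟩ ⟨q, hq⟩ ⟨r, hr⟩
    exact ⟨p + q + r + 1, by omega, pow_eq_zero_of_le (by omega) hp,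
      pow_eq_zero_of_le (by omega) hq, pow_eq_zero_of_le (by omega) hr⟩
  -- master computation via ev3
  have master : ∀ (a b c : R) (n : ℕ), 1 ≤ n → a ^ n = 0 → b ^ n = 0 → c ^ n = 0 →
      (op a b) ^ (3 * n + 1) = 0 ∧
      op (op a b) c =
        ev3 ![a, b, c]
          (Finsupp.single (0 : Fin 3) n + Finsupp.single 1 n + Finsupp.single 2 n)
          (substF2 F (substF2 F (X (0 : Fin 3)) (X 1)) (X 2)) ∧
      op a (op b c) =
        ev3 ![a, b, c]
          (Finsupp.single (0 : Fin 3) n + Finsupp.single 1 n + Finsupp.single 2 n)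
          (substF2 F (X (0 : Fin 3)) (substF2 F (X 1) (X 2))) := by
    intro a b c n hn ha hb hc
    set v : Fin 3 → R := ![a, b, c] with hv_def
    set D : Fin 3 →₀ ℕ :=
      Finsupp.single (0 : Fin 3) n + Finsupp.single 1 n + Finsupp.single 2 n with hD_def
    have hDi : ∀ i, D i = n := by
      intro i
      fin_cases i <;> simp [hD_def, Finsupp.single_apply]
    have hvpow : ∀ i, v i ^ n = 0 := by
      intro i
      fin_cases i <;> simpa [hv_def]
    have hv : ∀ i, v i ^ (D i + 1) = 0 := by
      intro i
      rw [hDi i]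
      exact pow_eq_zero_of_le (Nat.le_succ n) (hvpow i)
    have hD1 : ∀ i, 1 ≤ D i := fun i => by rw [hDi i]; exact hn
    have hdg : dg D = 3 * n := by
      rw [show dg D = ∑ i, D i from Finsupp.sum_fintype _ _ (fun _ => rfl),
        Fin.sum_univ_three, hDi, hDi, hDi]
      ring
    have hL : dg D < 3 * n + 1 := by omega
    have hnL : n ≤ 3 * n + 1 := by omega
    have hXc : ∀ i : Fin 3, (constantCoeff : MvPowerSeries (Fin 3) R →+* R) (X i) = 0 := fun i => constantCoeff_X i
    have hF00 : coeff (0 : Fin 2 →₀ ℕ) F = 0 := by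
      have := hX 0
      rwa [Finsupp.single_zero, if_neg (by omega)] at this
    have hdg0 : dg (0 : Fin 3 →₀ ℕ) < 1 := by
      rw [show dg (0 : Fin 3 →₀ ℕ) = 0 from Finsupp.sum_zero_index]
      omega
    have hcs : ∀ g h : MvPowerSeries (Fin 3) R, constantCoeff g = 0 →
        constantCoeff h = 0 → constantCoeff (substF2 F g h) = 0 := by
      intro g h hg hh
      rw [← coeff_zero_eq_constantCoeff]
      rw [coeff_substF2 F g h hg hh hdg0, Finset.sum_range_one, Finset.sum_range_one,
        pow_zero, pow_zero, one_mul, Finsupp.single_zero, Finsupp.single_zero, add_zero]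
      rw [hF00, zero_mul]
    have hg1 : (constantCoeff : MvPowerSeries (Fin 3) R →+* R) (substF2 F (X 0) (X 1)) = 0 :=
      hcs _ _ (hXc 0) (hXc 1)
    have hg2 : (constantCoeff : MvPowerSeries (Fin 3) R →+* R) (substF2 F (X 1) (X 2)) = 0 :=
      hcs _ _ (hXc 1) (hXc 2)
    have hv0 : v 0 = a := rfl
    have hv1 : v 1 = b := rfl
    have hv2 : v 2 = c := rfl
    have e1 : ev3 v D (substF2 F (X 0) (X 1)) = op a b := by
      rw [ev3_substF2 F v D hv _ _ (hXc 0) (hXc 1) hL, ev3_X v D 0 (hD1 0),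
        ev3_X v D 1 (hD1 1), hv0, hv1,
        ← wd a b (3 * n + 1) (pow_eq_zero_of_le hnL ha) (pow_eq_zero_of_le hnL hb)]
    have e1' : ev3 v D (substF2 F (X 1) (X 2)) = op b c := by
      rw [ev3_substF2 F v D hv _ _ (hXc 1) (hXc 2) hL, ev3_X v D 1 (hD1 1),
        ev3_X v D 2 (hD1 2), hv1, hv2,
        ← wd b c (3 * n + 1) (pow_eq_zero_of_le hnL hb) (pow_eq_zero_of_le hnL hc)]
    have hpow1 : (op a b) ^ (3 * n + 1) = 0 := by
      rw [← e1, ← ev3_pow v D hv]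
      exact ev3_pow_vanish v D _ hg1 hL
    have hpow2 : (op b c) ^ (3 * n + 1) = 0 := by
      rw [← e1', ← ev3_pow v D hv]
      exact ev3_pow_vanish v D _ hg2 hL
    refine ⟨hpow1, ?_, ?_⟩
    · rw [ev3_substF2 F v D hv _ _ hg1 (hXc 2) hL, e1, ev3_X v D 2 (hD1 2), hv2]
      exact wd _ _ (3 * n + 1) hpow1 (pow_eq_zero_of_le hnL hc)
    · rw [ev3_substF2 F v D hv _ _ (hXc 0) hg2 hL, e1', ev3_X v D 0 (hD1 0), hv0]
      exact wd _ _ (3 * n + 1) (pow_eq_zero_of_le hnL ha) hpow2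
  -- closure
  have hclos : ∀ a b : R, IsNilpotent a → IsNilpotent b → IsNilpotent (op a b) := by
    intro a b hna hnb
    obtain ⟨n, hn, ha, hb, -⟩ := comm3 a b 0 hna hnb ⟨1, pow_one 0⟩
    exact ⟨3 * n + 1, (master a b 0 n hn ha hb (zero_pow (by omega))).1⟩
  -- neutral element
  have hneut : ∀ a : R, IsNilpotent a → op a 0 = a ∧ op 0 a = a := by
    rintro a ⟨m, hm⟩
    have ha : a ^ (m + 2) = 0 := pow_eq_zero_of_le (by omega) hm
    have h0 : (0 : R) ^ (m + 2) = 0 := zero_pow (by omega)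
    constructor
    · rw [wd a 0 (m + 2) ha h0]
      exact evalx0 F hX a (m + 2) (by omega)
    · rw [wd 0 a (m + 2) h0 ha]
      exact eval0x F hY a (m + 2) (by omega)
  -- commutativity
  have hcomm : ∀ a b : R, IsNilpotent a → IsNilpotent b → op a b = op b a := by
    intro a b hna hnb
    obtain ⟨n, hn, ha, hb, -⟩ := comm3 a b 0 hna hnb ⟨1, pow_one 0⟩
    rw [wd a b n ha hb, wd b a n hb ha]
    unfold evalF2
    rw [Finset.sum_comm]
    apply Finset.sum_congr rfl
    intro j _
    apply Finset.sum_congr rfl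
    intro i _
    rw [hsymm i j]
    ring
  -- associativity
  have hassoc' : ∀ a b c : R, IsNilpotent a → IsNilpotent b → IsNilpotent c →
      op (op a b) c = op a (op b c) := by
    intro a b c hna hnb hnc
    obtain ⟨n, hn, ha, hb, hc⟩ := comm3 a b c hna hnb hnc
    obtain ⟨-, hLft, hRgt⟩ := master a b c n hn ha hb hc
    rw [hLft, hRgt, hassoc]
  -- inverses
  have hinv : ∀ a : R, IsNilpotent a → ∃ b : R, IsNilpotent b ∧ op a b = 0 := by
    rintro a ⟨n, hnpow⟩
    have hna : IsNilpotent a := ⟨n, hnpow⟩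
    have dvdlem : ∀ y y' : R, IsNilpotent y → IsNilpotent y' →
        a * (y - y') ∣ (op a y - op a y' - (y - y')) := by
      intro y y' hy hy'
      obtain ⟨N, hN1, ha', hy1, hy1'⟩ := comm3 a y y' hna hy hy'
      have ha2 : a ^ (N + 2) = 0 := pow_eq_zero_of_le (by omega) ha'
      have hy2 : y ^ (N + 2) = 0 := pow_eq_zero_of_le (by omega) hy1
      have hy2' : y' ^ (N + 2) = 0 := pow_eq_zero_of_le (by omega) hy1'
      rw [wd a y (N + 2) ha2 hy2, wd a y' (N + 2) ha2 hy2']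
      exact dvd_aux F hY a y y' (N + 2) (by omega)
    have step : ∀ k : ℕ, ∃ b : R, IsNilpotent b ∧ a ^ (k + 1) ∣ op a b := by
      intro k
      induction k with
      | zero =>
        refine ⟨0, ⟨1, pow_one 0⟩, ?_⟩
        rw [(hneut a ⟨n, hnpow⟩).1, pow_one]
      | succ k ih =>
        obtain ⟨b, hbnil, hdvd⟩ := ih
        have henil : IsNilpotent (op a b) := hclos a b ⟨n, hnpow⟩ hbnil
        refine ⟨b - op a b, (Commute.all _ _).isNilpotent_sub hbnil henil, ?_⟩
        have hd := dvdlem (b - op a b) b ((Commute.all _ _).isNilpotent_sub hbnil henil) hbnil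
        have hsimp : op a (b - op a b) - op a b - (b - op a b - b) = op a (b - op a b) := by
          ring
        have heq : a * (b - op a b - b) = -(a * op a b) := by ring
        rw [hsimp, heq, neg_dvd] at hd
        have : a ^ (k + 1 + 1) ∣ a * op a b := by
          rw [pow_succ']
          exact mul_dvd_mul_left a hdvd
        exact dvd_trans this hd
    obtain ⟨b, hbnil, hdvd⟩ := step n
    have hz : a ^ (n + 1) = 0 := pow_eq_zero_of_le (by omega) hnpow
    rw [hz, zero_dvd_iff] at hdvd
    exact ⟨b, hbnil, hdvd⟩
  exact ⟨op, wd, hclos, hneut, hcomm, hassoc', hinv⟩
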